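/- arXiv:2505.10137 — 2 statements merged into one kernel-verified Lean document; each statement's English description precedes it below -/
import Mathlib

section
/- For any fixed s ∈ (0,1), (1-s)^θ · ∫_θ^∞ y^{θ-1} e^{-y(1-s)} dy / Γ(θ) → 1 as θ → ∞. -/
open Filter MeasureTheory Set

/-- for fixed `s ∈ (0,1)`,
`(1-s)^θ ∫_θ^∞ y^{θ-1} e^{-y(1-s)} dy / Γ(θ) → 1` as `θ → ∞`. -/
theorem stmt4 (s : ℝ) (hs : s ∈ Set.Ioo (0 : ℝ) 1) :
    Tendsto (fun θ : ℝ =>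
        (1 - s) ^ θ * (∫ y in Ioi θ, y ^ (θ - 1) * Real.exp (-y * (1 - s))) / Real.Gamma θ)
      atTop (nhds 1) := by
  obtain ⟨hs0, hs1⟩ := hs
  have hc0 : (0:ℝ) < 1 - s := by linarith
  set b : ℝ := (2 - s) / (2 * (1 - s)) with hb_def
  have hb1 : 1 < b := by
    rw [hb_def, lt_div_iff₀ (by linarith)]; nlinarith
  set r : ℝ := Real.exp (s / 2) / b with hr_def
  have hr0 : 0 < r := div_pos (Real.exp_pos _) (by linarith)
  have hr1 : r < 1 := by
    rw [hr_def, div_lt_one (by linarith)]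
    have h1 : (-(s/2)) + 1 < Real.exp (-(s/2)) := Real.add_one_lt_exp (by linarith)
    have h2 : Real.exp (s/2) * Real.exp (-(s/2)) = 1 := by
      rw [← Real.exp_add]; simp
    have hb' : b * (2 * (1 - s)) = 2 - s := div_mul_cancel₀ _ (by linarith)
    nlinarith [Real.exp_pos (s/2), Real.exp_pos (-(s/2)), sq_nonneg s]
  -- B = lower incomplete integral
  set B : ℝ → ℝ := fun θ => ∫ x in Ioc 0 ((1-s)*θ), Real.exp (-x) * x ^ (θ-1) with hB_def
  have hBnonneg : ∀ θ : ℝ, 0 ≤ B θ := by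
    intro θ
    apply setIntegral_nonneg measurableSet_Ioc
    intro x hx
    exact mul_nonneg (Real.exp_pos _).le (Real.rpow_nonneg hx.1.le _)
  have hBbound : ∀ θ : ℝ, 1 ≤ θ → B θ ≤ r ^ θ * Real.Gamma θ := by
    intro θ hθ
    have hθ0 : (0:ℝ) < θ := by linarith
    have hint : IntegrableOn (fun x : ℝ => x ^ (θ-1) * Real.exp (-b * x)) (Ioi 0) := by
      have := integrableOn_rpow_mul_exp_neg_mul_rpow (p := 1) (s := θ-1) (b := b)
        (by linarith) zero_lt_one (by linarith)
      refine this.congr_fun (fun x hx => ?_) measurableSet_Ioi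
      simp only [Real.rpow_one]
    have step1 : B θ ≤ ∫ x in Ioc 0 ((1-s)*θ),
        Real.exp (s/2 * θ) * (x ^ (θ-1) * Real.exp (-b * x)) := by
      apply setIntegral_mono_on
      · exact ((Real.GammaIntegral_convergent hθ0).mono_set Ioc_subset_Ioi_self)
      · exact ((hint.mono_set Ioc_subset_Ioi_self).const_mul _)
      · exact measurableSet_Ioc
      · intro x hx
        rw [mul_comm (Real.exp (-x)), mul_comm (Real.exp (s/2*θ)), mul_assoc]
        apply mul_le_mul_of_nonneg_left _ (Real.rpow_nonneg hx.1.le _)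
        rw [← Real.exp_add]
        apply Real.exp_le_exp.mpr
        have hx2 : x ≤ (1-s)*θ := hx.2
        have hb2 : (b - 1) * (2 * (1-s)) = s := by
          have hb' : b * (2 * (1 - s)) = 2 - s := div_mul_cancel₀ _ (by linarith)
          nlinarith
        nlinarith [mul_le_mul_of_nonneg_left hx2 (show (0:ℝ) ≤ b - 1 by linarith)]
    have step2 : ∫ x in Ioc 0 ((1-s)*θ),
        Real.exp (s/2 * θ) * (x ^ (θ-1) * Real.exp (-b * x))
        ≤ ∫ x in Ioi 0, Real.exp (s/2 * θ) * (x ^ (θ-1) * Real.exp (-b * x)) := by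
      apply setIntegral_mono_set (hint.const_mul _)
      · filter_upwards [self_mem_ae_restrict measurableSet_Ioi] with x hx
        have : (0:ℝ) < x := hx
        positivity
      · exact HasSubset.Subset.eventuallyLE Ioc_subset_Ioi_self
    have step3 : ∫ x in Ioi 0, Real.exp (s/2 * θ) * (x ^ (θ-1) * Real.exp (-b * x))
        = r ^ θ * Real.Gamma θ := by
      rw [integral_const_mul]
      have : ∫ x in Ioi 0, x ^ (θ-1) * Real.exp (-b * x)
          = (1/b) ^ θ * Real.Gamma θ := by
        rw [← Real.integral_rpow_mul_exp_neg_mul_Ioi hθ0 (by linarith : (0:ℝ) < b)]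
        congr 1 with x
        rw [neg_mul]
      rw [this, hr_def, Real.div_rpow (Real.exp_pos _).le (by linarith : (0:ℝ) ≤ b),
        ← Real.exp_mul, Real.div_rpow zero_le_one (by linarith : (0:ℝ) ≤ b), Real.one_rpow]
      ring
    calc B θ ≤ _ := step1
      _ ≤ _ := step2
      _ = _ := step3
  have hkey : (fun θ : ℝ =>
      (1 - s) ^ θ * (∫ y in Ioi θ, y ^ (θ - 1) * Real.exp (-y * (1 - s))) / Real.Gamma θ)
      =ᶠ[atTop] (fun θ : ℝ => 1 - B θ / Real.Gamma θ) := by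
    filter_upwards [eventually_ge_atTop (1:ℝ)] with θ hθ
    have hθ0 : (0:ℝ) < θ := by linarith
    have hΓ : 0 < Real.Gamma θ := Real.Gamma_pos_of_pos hθ0
    have hA : (1 - s) ^ θ * (∫ y in Ioi θ, y ^ (θ - 1) * Real.exp (-y * (1 - s)))
        = ∫ x in Ioi ((1-s)*θ), Real.exp (-x) * x ^ (θ-1) := by
      have hcomp := integral_comp_mul_left_Ioi
        (fun x : ℝ => Real.exp (-x) * x ^ (θ-1)) θ hc0
      have hL : (∫ y in Ioi θ, Real.exp (-((1-s)*y)) * ((1-s)*y) ^ (θ-1))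
          = (1-s)^(θ-1) * ∫ y in Ioi θ, y ^ (θ-1) * Real.exp (-y*(1-s)) := by
        rw [← integral_const_mul]
        apply setIntegral_congr_fun measurableSet_Ioi
        intro y hy
        have hy0 : (0:ℝ) < y := lt_trans hθ0 hy
        show Real.exp (-((1-s)*y)) * ((1-s)*y) ^ (θ-1)
          = (1-s)^(θ-1) * (y ^ (θ-1) * Real.exp (-y*(1-s)))
        rw [Real.mul_rpow hc0.le hy0.le, show -((1-s)*y) = -y*(1-s) by ring]
        ring
      rw [hL, smul_eq_mul] at hcomp
      have hpow : (1 - s) ^ θ = (1-s) * (1-s)^(θ-1) := by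
        rw [Real.rpow_sub hc0, Real.rpow_one]
        field_simp
      rw [hpow, mul_assoc, hcomp]
      field_simp
    have hsplit : Real.Gamma θ
        = B θ + ∫ x in Ioi ((1-s)*θ), Real.exp (-x) * x ^ (θ-1) := by
      have hpos : (0:ℝ) ≤ (1-s)*θ := by positivity
      rw [Real.Gamma_eq_integral hθ0, ← Ioc_union_Ioi_eq_Ioi hpos,
        setIntegral_union Ioc_disjoint_Ioi_same measurableSet_Ioi
          ((Real.GammaIntegral_convergent hθ0).mono_set Ioc_subset_Ioi_self)
          ((Real.GammaIntegral_convergent hθ0).mono_set (Ioi_subset_Ioi hpos))]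
    rw [hA, show (∫ x in Ioi ((1-s)*θ), Real.exp (-x) * x ^ (θ-1))
      = Real.Gamma θ - B θ by linarith]
    field_simp
  have h0 : Tendsto (fun θ => B θ / Real.Gamma θ) atTop (nhds 0) := by
    apply tendsto_of_tendsto_of_tendsto_of_le_of_le' tendsto_const_nhds
      (tendsto_rpow_atTop_of_base_lt_one r (by linarith) hr1)
    · filter_upwards [eventually_gt_atTop (0:ℝ)] with θ hθ
      exact div_nonneg (hBnonneg θ) (Real.Gamma_pos_of_pos hθ).le
    · filter_upwards [eventually_ge_atTop (1:ℝ)] with θ hθ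
      have hΓ : 0 < Real.Gamma θ := Real.Gamma_pos_of_pos (by linarith)
      rw [div_le_iff₀ hΓ]
      exact hBbound θ hθ
  have hT : Tendsto (fun θ : ℝ => 1 - B θ / Real.Gamma θ) atTop (nhds 1) := by
    simpa using (tendsto_const_nhds : Tendsto (fun _ : ℝ => (1:ℝ)) atTop (nhds 1)).sub h0
  exact Tendsto.congr' hkey.symm hT
end

section
/- Let f be a probability generating function with iterates f_n, let J_0 = min{j ≥ 1 : P(ξ = j) > 0}, and suppose P(ξ = J_0) > 0 and f'(f_n(0)) > 0 for all n. Then for every n ≥ 0, J_0!·P(Z(n+1)=J_0) = f_{n+1}^{(J_0)}(0) = P(ξ = J_0)·∏_{i=1}^{n} f'(f_i(0)) > 0, where Z is the associated Galton-Watson process started from one particle. -/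
open FormalMultilinearSeries

/-- Coefficient of a composition of formal multilinear series over `ℝ` in one dimension. -/
lemma coeff_comp_aux (q P : FormalMultilinearSeries ℝ ℝ ℝ) (m : ℕ) :
    (q.comp P).coeff m =
      ∑ c : Composition m, (∏ i, P.coeff (c.blocksFun i)) * q.coeff c.length := by
  have h0 : (q.comp P).coeff m = (q.comp P) m (fun _ => 1) := rfl
  rw [h0]
  simp only [FormalMultilinearSeries.comp, ContinuousMultilinearMap.sum_apply]
  refine Finset.sum_congr rfl fun c _ => ?_
  rw [FormalMultilinearSeries.compAlongComposition_apply]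
  have h1 : P.applyComposition c (fun _ => 1) = fun i => P.coeff (c.blocksFun i) := by
    funext i
    simp [FormalMultilinearSeries.applyComposition,
      FormalMultilinearSeries.apply_eq_prod_smul_coeff, Function.comp]
  rw [h1, FormalMultilinearSeries.apply_eq_prod_smul_coeff]
  simp [smul_eq_mul]

lemma iteratedDeriv_of_hasFPowerSeriesAt {g : ℝ → ℝ} {P : FormalMultilinearSeries ℝ ℝ ℝ}
    {x : ℝ} (h : HasFPowerSeriesAt g P x) (m : ℕ) :
    iteratedDeriv m g x = (m.factorial : ℝ) * P.coeff m := by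
  obtain ⟨r, hr⟩ := h
  have h2 := hr.factorial_smul (1 : ℝ) m
  rw [iteratedDeriv_eq_iteratedFDeriv, ← h2]
  have : P m (fun _ => (1 : ℝ)) = P.coeff m := rfl
  rw [this, nsmul_eq_mul]

/-- for a probability generating function `f` with iterates `f_n = f^[n]`,
`J₀ = min{j ≥ 1 : P(ξ = j) > 0}`, `P(ξ = J₀) > 0` and `f'(f_n(0)) > 0` for all `n`,
one has `J₀! P(Z(n+1) = J₀) = f_{n+1}^{(J₀)}(0) = J₀! P(ξ = J₀) ∏_{i=1}^n f'(f_i(0)) > 0`. -/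
theorem stmt18 (p : ℕ → ℝ) (hp : ∀ i, 0 ≤ p i) (hpsum : ∑' i, p i = 1)
    (f : ℝ → ℝ) (hf : ∀ s, f s = ∑' i, p i * s ^ i)
    (J0 : ℕ) (hJ0 : 1 ≤ J0) (hpJ0 : 0 < p J0)
    (hmin : ∀ j, 1 ≤ j → j < J0 → p j = 0)
    (hderiv : ∀ n : ℕ, 0 < deriv f (f^[n] 0)) (n : ℕ) :
    iteratedDeriv J0 (f^[n + 1]) 0 =
      (J0.factorial : ℝ) * p J0 * ∏ i ∈ Finset.Icc 1 n, deriv f (f^[i] 0) ∧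
    0 < iteratedDeriv J0 (f^[n + 1]) 0 := by
  -- summability of p
  have hsum : Summable p := by
    by_contra h
    rw [tsum_eq_zero_of_not_summable h] at hpsum
    norm_num at hpsum
  have hple : ∀ i, p i ≤ 1 := by
    intro i
    calc p i ≤ ∑' j, p j := Summable.le_tsum hsum i (fun j _ => hp j)
    _ = 1 := hpsum
  have hsummable : ∀ s : ℝ, |s| ≤ 1 → Summable (fun i => p i * s ^ i) := by
    intro s hs
    refine Summable.of_norm_bounded hsum (fun i => ?_)
    rw [norm_mul, norm_pow, Real.norm_eq_abs, Real.norm_eq_abs, abs_of_nonneg (hp i)]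
    exact mul_le_of_le_one_right (hp i) (pow_le_one₀ (abs_nonneg s) hs)
  -- power series of f on the unit ball
  have hball : HasFPowerSeriesOnBall f (FormalMultilinearSeries.ofScalars ℝ p) 0 1 := by
    refine ⟨?_, one_pos, ?_⟩
    · refine FormalMultilinearSeries.le_radius_of_bound _ 1 (fun m => ?_)
      rw [FormalMultilinearSeries.ofScalars_norm]
      simp only [NNReal.coe_one, one_pow, mul_one, Real.norm_eq_abs]
      rw [abs_of_nonneg (hp m)]
      exact hple m
    · intro y hy
      have hy' : |y| < 1 := by
        rw [EMetric.mem_ball, edist_zero_right] at hy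
        rw [← ofReal_norm, ENNReal.ofReal_lt_one] at hy
        simpa [← Real.norm_eq_abs] using hy
      have hS : HasSum (fun i => p i * y ^ i) (f (0 + y)) := by
        rw [zero_add, hf y]
        exact (hsummable y hy'.le).hasSum
      convert hS using 2 with i
      · rfl
      rw [FormalMultilinearSeries.ofScalars_apply_eq, smul_eq_mul]
  -- iterates stay in [0,1)
  have hIco : ∀ k, 0 ≤ f^[k] 0 ∧ f^[k] 0 < 1 := by
    intro k
    induction k with
    | zero => simp
    | succ k ih =>
      rw [Function.iterate_succ_apply']
      obtain ⟨h0, h1⟩ := ih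
      set s := f^[k] 0 with hs
      have habs : |s| ≤ 1 := by rw [abs_of_nonneg h0]; exact h1.le
      constructor
      · rw [hf s]
        exact tsum_nonneg fun i => mul_nonneg (hp i) (pow_nonneg h0 i)
      · rw [hf s, ← hpsum]
        refine Summable.tsum_lt_tsum (i := J0) (fun i => ?_) ?_ (hsummable s habs) hsum
        · exact mul_le_of_le_one_right (hp i) (pow_le_one₀ h0 h1.le)
        · have hpow : s ^ J0 < 1 := pow_lt_one₀ h0 h1 (by omega)
          calc p J0 * s ^ J0 < p J0 * 1 := by
                exact mul_lt_mul_of_pos_left hpow hpJ0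
          _ = p J0 := mul_one _
  -- key induction on the power series of iterates
  have key : ∀ m : ℕ, ∃ P : FormalMultilinearSeries ℝ ℝ ℝ,
      HasFPowerSeriesAt (f^[m + 1]) P 0 ∧ (∀ j, 1 ≤ j → j < J0 → P.coeff j = 0) ∧
      P.coeff J0 = p J0 * ∏ i ∈ Finset.Icc 1 m, deriv f (f^[i] 0) := by
    intro m
    induction m with
    | zero =>
      refine ⟨FormalMultilinearSeries.ofScalars ℝ p, ?_, ?_, ?_⟩
      · simpa [Function.iterate_one] using hball.hasFPowerSeriesAt
      · intro j h1 h2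
        have hc : (FormalMultilinearSeries.ofScalars ℝ p).coeff j = p j := by
          simp [FormalMultilinearSeries.coeff, FormalMultilinearSeries.ofScalars,
            List.prod_ofFn]
        rw [hc]
        exact hmin j h1 h2
      · have hc : (FormalMultilinearSeries.ofScalars ℝ p).coeff J0 = p J0 := by
          simp [FormalMultilinearSeries.coeff, FormalMultilinearSeries.ofScalars,
            List.prod_ofFn]
        rw [hc]
        simp
    | succ m ih =>
      obtain ⟨P, hPat, hPlow, hPJ⟩ := ih
      have hx : f^[m + 1] 0 ∈ Metric.eball (0 : ℝ) 1 := by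
        rw [Metric.mem_eball, edist_zero_right]
        have h0 := (hIco (m + 1)).1
        have h1 := (hIco (m + 1)).2
        have : ‖f^[m + 1] 0‖ < 1 := by
          rw [Real.norm_eq_abs, abs_of_nonneg h0]; exact h1
        rw [← ofReal_norm, ENNReal.ofReal_lt_one]; exact this
      obtain ⟨q, hq⟩ := hball.analyticAt_of_mem hx
      have hcomp : HasFPowerSeriesAt (f^[m + 1 + 1]) (q.comp P) 0 := by
        rw [Function.iterate_succ' f (m + 1)]
        exact hq.comp hPat
      have hq1 : q.coeff 1 = deriv f (f^[m + 1] 0) := hq.deriv.symm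
      refine ⟨q.comp P, hcomp, ?_, ?_⟩
      · intro j h1 h2
        rw [coeff_comp_aux]
        refine Finset.sum_eq_zero fun c _ => ?_
        have hlen : 0 < c.length := c.length_pos_of_pos (by omega)
        refine mul_eq_zero_of_left
          (Finset.prod_eq_zero (Finset.mem_univ (⟨0, hlen⟩ : Fin c.length)) ?_) _
        exact hPlow _ (c.one_le_blocksFun _) (lt_of_le_of_lt (c.blocksFun_le _) h2)
      · rw [coeff_comp_aux]
        have hJpos : 0 < J0 := by omega
        rw [Finset.sum_eq_single (Composition.single J0 hJpos)]
        · rw [Finset.prod_congr rfl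
            (fun i _ => by rw [Composition.single_blocksFun hJpos i])]
          rw [Composition.single_length hJpos, hq1]
          simp only [Finset.prod_const, Finset.card_univ, Fintype.card_fin]
          rw [pow_one, hPJ, Finset.prod_Icc_succ_top (by omega : 1 ≤ m + 1)]
          ring
        · intro c _ hc
          have hblocks := (Composition.ne_single_iff hJpos).mp hc
          have hlen : 0 < c.length := c.length_pos_of_pos hJpos
          exact mul_eq_zero_of_left
            (Finset.prod_eq_zero (Finset.mem_univ (⟨0, hlen⟩ : Fin c.length))
              (hPlow _ (c.one_le_blocksFun _) (hblocks _))) _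
        · intro h
          exact absurd (Finset.mem_univ _) h
  obtain ⟨P, hPat, _, hPJ⟩ := key n
  have hiter : iteratedDeriv J0 (f^[n + 1]) 0 = (J0.factorial : ℝ) * P.coeff J0 :=
    iteratedDeriv_of_hasFPowerSeriesAt hPat J0
  have hprod : 0 < ∏ i ∈ Finset.Icc 1 n, deriv f (f^[i] 0) :=
    Finset.prod_pos fun i _ => hderiv i
  constructor
  · rw [hiter, hPJ]; ring
  · rw [hiter, hPJ]
    have hfac : (0 : ℝ) < (J0.factorial : ℝ) := by positivity
    exact mul_pos hfac (mul_pos hpJ0 hprod)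
end
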